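/- Let n, m ≥ 1, aτ ∈ W_n and bμ ∈ W_m. If the conjugacy class of aτ in W_n is of type D, then the conjugacy class of aτ # bμ in W_{n+m} is of type D. -/

import Mathlib

/-- The action of a permutation `σ ∈ S_n` on a vector `a ∈ (ℤ/2)^n`:
`(σ · a)_i = a_{σ⁻¹ i}`. -/
def permAct {n : ℕ} (σ : Equiv.Perm (Fin n)) (a : Fin n → ZMod 2) : Fin n → ZMod 2 :=
  fun i => a (σ⁻¹ i)

/-- The underlying set of the hyperoctahedral group `W n = (ℤ/2)^n ⋊ S_n`. -/
@[ext]
structure W (n : ℕ) where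
  vec : Fin n → ZMod 2
  perm : Equiv.Perm (Fin n)

/-- Group structure of `W n`: `(a,σ)(b,μ) = (a + σ·b, σμ)`. -/
instance (n : ℕ) : Group (W n) where
  mul x y := ⟨x.vec + permAct x.perm y.vec, x.perm * y.perm⟩
  one := ⟨0, 1⟩
  inv x := ⟨permAct x.perm⁻¹ (-x.vec), x.perm⁻¹⟩
  mul_assoc x y z := by
    refine W.ext ?_ ?_
    · show (x.vec + permAct x.perm y.vec) + permAct (x.perm * y.perm) z.vec
        = x.vec + permAct x.perm (y.vec + permAct y.perm z.vec)
      funext i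
      simp [permAct, mul_inv_rev, Equiv.Perm.mul_apply, add_assoc]
    · exact mul_assoc _ _ _
  one_mul x := by
    refine W.ext ?_ ?_
    · show (0 : Fin n → ZMod 2) + permAct 1 x.vec = x.vec
      funext i; simp [permAct]
    · exact one_mul _
  mul_one x := by
    refine W.ext ?_ ?_
    · show x.vec + permAct x.perm 0 = x.vec
      funext i; simp [permAct]
    · exact mul_one _
  inv_mul_cancel x := by
    refine W.ext ?_ ?_
    · show permAct x.perm⁻¹ (-x.vec) + permAct x.perm⁻¹ x.vec = 0
      funext i; simp [permAct, CharTwo.add_self_eq_zero]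
    · exact inv_mul_cancel _

@[simp] theorem W.mul_vec {n : ℕ} (x y : W n) :
    (x * y).vec = x.vec + permAct x.perm y.vec := rfl
@[simp] theorem W.mul_perm {n : ℕ} (x y : W n) :
    (x * y).perm = x.perm * y.perm := rfl
@[simp] theorem W.one_vec {n : ℕ} : (1 : W n).vec = 0 := rfl
@[simp] theorem W.one_perm {n : ℕ} : (1 : W n).perm = 1 := rfl
@[simp] theorem W.inv_vec {n : ℕ} (x : W n) :
    (x⁻¹).vec = permAct x.perm⁻¹ (-x.vec) := rfl
@[simp] theorem W.inv_perm {n : ℕ} (x : W n) : (x⁻¹).perm = x.perm⁻¹ := rfl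

/-- Conjugation `x ▷ y = x y x⁻¹` in a group. -/
def conjAct' {G : Type*} [Group G] (x y : G) : G := x * y * x⁻¹

/-- `sq(x,y) = x ▷ (y ▷ (x ▷ y))`. -/
def sqD {G : Type*} [Group G] (x y : G) : G := conjAct' x (conjAct' y (conjAct' x y))

/-- Conjugacy class of `x` in the group `G`. -/
def conjClass {G : Type*} [Group G] (x : G) : Set G := {y | ∃ t : G, y = t * x * t⁻¹}

/-- A subset `O` of a group is of type D. -/
def IsTypeD {G : Type*} [Group G] (O : Set G) : Prop :=
  ∃ R S : Set G, R ⊆ O ∧ S ⊆ O ∧ R.Nonempty ∧ S.Nonempty ∧ Disjoint R S ∧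
    (∀ r ∈ R, ∀ r' ∈ R, conjAct' r r' ∈ R) ∧
    (∀ s ∈ S, ∀ s' ∈ S, conjAct' s s' ∈ S) ∧
    (∀ r ∈ R, ∀ s ∈ S, conjAct' r s ∈ S ∧ conjAct' s r ∈ R) ∧
    (∃ a ∈ R, ∃ b ∈ S, sqD a b ≠ b)

/-- The subgroup `K_n ⋊ S_n` of `W n`, where `K_n = {a : a_1 + ⋯ + a_n = 0}`. -/
def Ksub (n : ℕ) : Subgroup (W n) where
  carrier := {x | ∑ i, x.vec i = 0}
  one_mem' := by simp
  mul_mem' := by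
    intro x y hx hy
    simp only [Set.mem_setOf_eq] at *
    rw [W.mul_vec]
    simp only [Pi.add_apply, Finset.sum_add_distrib, hx, zero_add, permAct]
    rw [Equiv.sum_comp x.perm⁻¹ y.vec]
    exact hy
  inv_mem' := by
    intro x hx
    simp only [Set.mem_setOf_eq] at *
    rw [W.inv_vec]
    simp only [permAct, inv_inv, Pi.neg_apply]
    rw [Finset.sum_neg_distrib, Equiv.sum_comp x.perm x.vec, hx, neg_zero]
/-- Juxtaposition of permutations: `(π#τ)(i) = π(i)` for `i < n`, `(π#τ)(n+j) = n + τ(j)`. -/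
def pjux {n m : ℕ} (π : Equiv.Perm (Fin n)) (τ : Equiv.Perm (Fin m)) :
    Equiv.Perm (Fin (n + m)) :=
  finSumFinEquiv.permCongr (Equiv.sumCongr π τ)

/-- Juxtaposition `aπ # bτ = (a#b, π#τ) ∈ W (n+m)`. -/
def wjux {n m : ℕ} (x : W n) (y : W m) : W (n + m) :=
  ⟨Fin.append x.vec y.vec, pjux x.perm y.perm⟩

/-- `aπ ⊥ bτ`: every cycle length (orbit size) of `π` differs from every cycle
length of `τ`. -/
def orthogonal {n m : ℕ} (π : Equiv.Perm (Fin n)) (τ : Equiv.Perm (Fin m)) : Prop :=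
  ∀ (i : Fin n) (j : Fin m),
    Function.minimalPeriod (⇑π) i ≠ Function.minimalPeriod (⇑τ) j


lemma pjux_mul {n m : ℕ} (π π' : Equiv.Perm (Fin n)) (τ τ' : Equiv.Perm (Fin m)) :
    pjux π τ * pjux π' τ' = pjux (π * π') (τ * τ') := by
  ext i
  simp [pjux, Equiv.permCongr_apply, Equiv.Perm.mul_apply]

lemma pjux_inv {n m : ℕ} (π : Equiv.Perm (Fin n)) (τ : Equiv.Perm (Fin m)) :
    (pjux π τ)⁻¹ = pjux π⁻¹ τ⁻¹ := by
  rw [eq_comm, eq_inv_iff_mul_eq_one, pjux_mul]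
  ext i
  simp [pjux, Equiv.permCongr_apply]

lemma pjux_castAdd {n m : ℕ} (π : Equiv.Perm (Fin n)) (τ : Equiv.Perm (Fin m)) (i : Fin n) :
    pjux π τ (Fin.castAdd m i) = Fin.castAdd m (π i) := by
  simp [pjux, Equiv.permCongr_apply, finSumFinEquiv_symm_apply_castAdd]

lemma pjux_natAdd {n m : ℕ} (π : Equiv.Perm (Fin n)) (τ : Equiv.Perm (Fin m)) (j : Fin m) :
    pjux π τ (Fin.natAdd n j) = Fin.natAdd n (τ j) := by
  simp [pjux, Equiv.permCongr_apply, finSumFinEquiv_symm_apply_natAdd]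

lemma permAct_pjux {n m : ℕ} (π : Equiv.Perm (Fin n)) (τ : Equiv.Perm (Fin m))
    (a : Fin n → ZMod 2) (b : Fin m → ZMod 2) :
    permAct (pjux π τ) (Fin.append a b) = Fin.append (permAct π a) (permAct τ b) := by
  funext i
  refine Fin.addCases (fun i => ?_) (fun j => ?_) i
  · simp [permAct, pjux_inv, pjux_castAdd, Fin.append_left]
  · simp [permAct, pjux_inv, pjux_natAdd, Fin.append_right]

lemma wjux_mul {n m : ℕ} (x x' : W n) (y y' : W m) :
    wjux x y * wjux x' y' = wjux (x * x') (y * y') := by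
  refine W.ext ?_ ?_
  · show Fin.append x.vec y.vec + permAct (pjux x.perm y.perm) (Fin.append x'.vec y'.vec)
      = Fin.append (x.vec + permAct x.perm x'.vec) (y.vec + permAct y.perm y'.vec)
    rw [permAct_pjux]
    funext i
    refine Fin.addCases (fun i => ?_) (fun j => ?_) i <;>
      simp [Fin.append_left, Fin.append_right]
  · exact pjux_mul _ _ _ _

lemma wjux_inv {n m : ℕ} (x : W n) (y : W m) :
    (wjux x y)⁻¹ = wjux x⁻¹ y⁻¹ := by
  rw [eq_comm, eq_inv_iff_mul_eq_one, wjux_mul, inv_mul_cancel, inv_mul_cancel]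
  refine W.ext ?_ ?_
  · funext i
    refine Fin.addCases (fun i => ?_) (fun j => ?_) i <;>
      simp [wjux, Fin.append_left, Fin.append_right]
  · ext i
    simp [wjux, pjux, Equiv.permCongr_apply]

lemma wjux_conj {n m : ℕ} (x x' : W n) (y y' : W m) :
    conjAct' (wjux x y) (wjux x' y') = wjux (conjAct' x x') (conjAct' y y') := by
  rw [conjAct', wjux_mul, wjux_inv, wjux_mul]; rfl

lemma wjux_left_inj {n m : ℕ} {x x' : W n} {y : W m} (h : wjux x y = wjux x' y) :
    x = x' := by
  refine W.ext ?_ ?_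
  · funext i
    have h1 : Fin.append x.vec y.vec = Fin.append x'.vec y.vec := congrArg W.vec h
    have h2 := congrFun h1 (Fin.castAdd m i)
    rwa [Fin.append_left, Fin.append_left] at h2
  · ext i
    have hp : pjux x.perm y.perm = pjux x'.perm y.perm := congrArg W.perm h
    have h2 := congrArg (fun σ : Equiv.Perm (Fin (n + m)) => σ (Fin.castAdd m i)) hp
    simp only [pjux_castAdd] at h2
    have h3 := congrArg Fin.val h2
    simpa using h3

/-- if the conjugacy class of `aτ` in `W n` is of type D, then so
is the conjugacy class of `aτ # bμ` in `W (n+m)`. -/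
theorem typeD_wjux (n m : ℕ) (hn : 1 ≤ n) (hm : 1 ≤ m) (x : W n) (y : W m)
    (hx : IsTypeD (conjClass x)) :
    IsTypeD (conjClass (wjux x y)) := by
  obtain ⟨R, S, hRO, hSO, hRne, hSne, hdisj, hRR, hSS, hRS, a, haR, b, hbS, hsq⟩ := hx
  refine ⟨(fun z => wjux z y) '' R, (fun z => wjux z y) '' S, ?_, ?_, ?_, ?_, ?_, ?_, ?_, ?_, ?_⟩
  · rintro _ ⟨r, hr, rfl⟩
    obtain ⟨t, rfl⟩ := hRO hr
    exact ⟨wjux t 1, by rw [wjux_mul, wjux_inv, wjux_mul]; simp⟩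
  · rintro _ ⟨s, hs, rfl⟩
    obtain ⟨t, rfl⟩ := hSO hs
    exact ⟨wjux t 1, by rw [wjux_mul, wjux_inv, wjux_mul]; simp⟩
  · exact hRne.image _
  · exact hSne.image _
  · rw [Set.disjoint_left]
    rintro _ ⟨r, hr, rfl⟩ ⟨s, hs, hes⟩
    exact Set.disjoint_left.mp hdisj hr (wjux_left_inj hes ▸ hs)
  · rintro _ ⟨r, hr, rfl⟩ _ ⟨r', hr', rfl⟩
    exact ⟨conjAct' r r', hRR r hr r' hr', by
      rw [wjux_conj]; congr 1; simp [conjAct']⟩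
  · rintro _ ⟨s, hs, rfl⟩ _ ⟨s', hs', rfl⟩
    exact ⟨conjAct' s s', hSS s hs s' hs', by
      rw [wjux_conj]; congr 1; simp [conjAct']⟩
  · rintro _ ⟨r, hr, rfl⟩ _ ⟨s, hs, rfl⟩
    constructor
    · exact ⟨conjAct' r s, (hRS r hr s hs).1, by
        rw [wjux_conj]; congr 1; simp [conjAct']⟩
    · exact ⟨conjAct' s r, (hRS r hr s hs).2, by
        rw [wjux_conj]; congr 1; simp [conjAct']⟩
  · refine ⟨wjux a y, ⟨a, haR, rfl⟩, wjux b y, ⟨b, hbS, rfl⟩, ?_⟩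
    have key : sqD (wjux a y) (wjux b y) = wjux (sqD a b) y := by
      rw [sqD, wjux_conj, wjux_conj, wjux_conj, sqD]
      congr 1
      simp only [conjAct']
      group
    rw [key]
    intro h
    exact hsq (wjux_left_inj h)
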